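/- arXiv:1810.02686 — 5 statements merged into one kernel-verified Lean document; each statement's English description precedes it below -/
import Mathlib

section
/- Let X be a compact Hausdorff space, u ≠ v points of X, and let 𝒜 be a unital subalgebra of C(X,ℝ) that separates points. If a, b are distinct real numbers, then 𝒜_{u,v}^{a,b} = {f ∈ 𝒜 : f(u) = a, f(v) = b} is dense in C_{u,v}^{a,b} = {f ∈ C(X,ℝ) : f(u) = a, f(v) = b} with respect to the sup norm. -/
theorem stmt9 (X : Type*) [TopologicalSpace X] [CompactSpace X] [T2Space X]
    (u v : X) (huv : u ≠ v) (A : Subalgebra ℝ C(X, ℝ)) (hA : A.SeparatesPoints)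
    (a b : ℝ) (hab : a ≠ b) :
    {f : C(X, ℝ) | f u = a ∧ f v = b} ⊆
      closure {f : C(X, ℝ) | f ∈ A ∧ f u = a ∧ f v = b} := by
  rintro f ⟨hfu, hfv⟩
  obtain ⟨h', ⟨h, hhA, rfl⟩, hne⟩ := hA huv
  have hc : h u - h v ≠ 0 := sub_ne_zero.mpr hne
  set p : C(X, ℝ) := (h u - h v)⁻¹ • (h - algebraMap ℝ C(X, ℝ) (h v)) with hp
  have hpA : p ∈ A := A.smul_mem (A.sub_mem hhA (A.algebraMap_mem _)) _
  have hpu : p u = 1 := by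
    simp only [hp, ContinuousMap.smul_apply, ContinuousMap.sub_apply,
      smul_eq_mul]
    field_simp
    simp
  have hpv : p v = 0 := by
    simp [hp]
  set q : C(X, ℝ) := 1 - p with hq
  have hqA : q ∈ A := A.sub_mem A.one_mem hpA
  have hqu : q u = 0 := by simp [hq, hpu]
  have hqv : q v = 1 := by simp [hq, hpv]
  have hdense : closure (A : Set C(X, ℝ)) = Set.univ := by
    have h2 := ContinuousMap.subalgebra_topologicalClosure_eq_top_of_separatesPoints A hA
    have := congrArg (fun S : Subalgebra ℝ C(X, ℝ) => (S : Set C(X, ℝ))) h2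
    simpa [Subalgebra.topologicalClosure] using this
  rw [Metric.mem_closure_iff]
  intro ε hε
  set C : ℝ := 1 + ‖p‖ + ‖q‖ with hC
  have hC0 : 0 < C := by positivity
  have hf : f ∈ closure (A : Set C(X, ℝ)) := by rw [hdense]; trivial
  rw [Metric.mem_closure_iff] at hf
  obtain ⟨g, hgA, hg⟩ := hf (ε / C) (by positivity)
  refine ⟨g + (a - g u) • p + (b - g v) • q, ⟨?_, ?_, ?_⟩, ?_⟩
  · exact A.add_mem (A.add_mem hgA (A.smul_mem hpA _)) (A.smul_mem hqA _)
  · simp [hpu, hqu]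
  · simp [hpv, hqv]
  · have hau : |a - g u| ≤ dist f g := by
      rw [← hfu]
      calc |f u - g u| = dist (f u) (g u) := by rw [Real.dist_eq]
        _ ≤ dist f g := ContinuousMap.dist_apply_le_dist u
    have hbv : |b - g v| ≤ dist f g := by
      rw [← hfv]
      calc |f v - g v| = dist (f v) (g v) := by rw [Real.dist_eq]
        _ ≤ dist f g := ContinuousMap.dist_apply_le_dist v
    have key : dist f (g + (a - g u) • p + (b - g v) • q)
        ≤ dist f g + |a - g u| * ‖p‖ + |b - g v| * ‖q‖ := by
      rw [dist_eq_norm]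
      have : f - (g + (a - g u) • p + (b - g v) • q)
          = (f - g) - (a - g u) • p - (b - g v) • q := by ring_nf
      rw [this]
      calc ‖(f - g) - (a - g u) • p - (b - g v) • q‖
          ≤ ‖(f - g) - (a - g u) • p‖ + ‖(b - g v) • q‖ := norm_sub_le _ _
        _ ≤ ‖f - g‖ + ‖(a - g u) • p‖ + ‖(b - g v) • q‖ := by
            have := norm_sub_le (f - g) ((a - g u) • p)
            linarith
        _ = ‖f - g‖ + |a - g u| * ‖p‖ + |b - g v| * ‖q‖ := by
            rw [norm_smul (a - g u) p, norm_smul (b - g v) q, Real.norm_eq_abs, Real.norm_eq_abs]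
        _ = dist f g + |a - g u| * ‖p‖ + |b - g v| * ‖q‖ := by rw [dist_eq_norm]
    have hp0 : 0 ≤ ‖p‖ := norm_nonneg _
    have hq0 : 0 ≤ ‖q‖ := norm_nonneg _
    have hd0 : 0 ≤ dist f g := dist_nonneg
    have : dist f g + |a - g u| * ‖p‖ + |b - g v| * ‖q‖ ≤ dist f g * C := by
      rw [hC]; nlinarith
    have hfin : dist f g * C < ε := (lt_div_iff₀ hC0).mp hg
    linarith
end

section
/- Let X be a compact Hausdorff space, u ≠ v points of X, and let 𝒜 be a unital subalgebra of C(X,ℝ) that separates points. For any real numbers a, b (possibly equal), the set {f ∈ 𝒜 : f(u) = a, f(v) = b} is dense in {f ∈ C(X,ℝ) : f(u) = a, f(v) = b} with respect to the sup norm. -/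
theorem stmt10 (X : Type*) [TopologicalSpace X] [CompactSpace X] [T2Space X]
    (u v : X) (huv : u ≠ v) (A : Subalgebra ℝ C(X, ℝ)) (hA : A.SeparatesPoints)
    (a b : ℝ) :
    {f : C(X, ℝ) | f u = a ∧ f v = b} ⊆
      closure {f : C(X, ℝ) | f ∈ A ∧ f u = a ∧ f v = b} := by
  classical
  obtain ⟨e₁, he₁A, he₁u, he₁v⟩ := hA.strongly (fun x => if x = u then (1:ℝ) else 0) u v
  obtain ⟨e₂, he₂A, he₂u, he₂v⟩ := hA.strongly (fun x => if x = v then (1:ℝ) else 0) u v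
  simp only [if_pos rfl, if_neg huv, if_neg (Ne.symm huv), if_true] at he₁u he₁v he₂u he₂v
  rintro f ⟨hfu, hfv⟩
  rw [Metric.mem_closure_iff]
  intro ε hε
  set M : ℝ := 1 + ‖e₁‖ + ‖e₂‖ with hM
  have hMpos : 0 < M := by positivity
  set δ : ℝ := ε / (2 * M) with hδ
  have hδpos : 0 < δ := by positivity
  obtain ⟨⟨g, hgA⟩, hg⟩ :=
    ContinuousMap.exists_mem_subalgebra_near_continuousMap_of_separatesPoints A hA f δ hδpos
  replace hg : ‖g - f‖ < δ := hg
  set g' : C(X, ℝ) := g + (a - g u) • e₁ + (b - g v) • e₂ with hg'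
  have hg'A : g' ∈ A := by
    exact A.add_mem (A.add_mem hgA (A.smul_mem he₁A _)) (A.smul_mem he₂A _)
  have hbu : |a - g u| ≤ ‖g - f‖ := by
    rw [← hfu]
    calc |f u - g u| = |(g - f) u| := by
          simp [abs_sub_comm]
      _ ≤ ‖g - f‖ := by
          simpa using ContinuousMap.norm_coe_le_norm (g - f) u
  have hbv : |b - g v| ≤ ‖g - f‖ := by
    rw [← hfv]
    calc |f v - g v| = |(g - f) v| := by
          simp [abs_sub_comm]
      _ ≤ ‖g - f‖ := by
          simpa using ContinuousMap.norm_coe_le_norm (g - f) v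
  refine ⟨g', ⟨hg'A, ?_, ?_⟩, ?_⟩
  · simp [hg', he₁u, he₂u]
  · simp [hg', he₁v, he₂v]
  · have key : dist f g' ≤ ‖g - f‖ * M := by
      have : f - g' = -((g - f) + (a - g u) • e₁ + (b - g v) • e₂) := by
        rw [hg']; abel
      rw [dist_eq_norm, this, norm_neg]
      calc ‖(g - f) + (a - g u) • e₁ + (b - g v) • e₂‖
          ≤ ‖(g - f) + (a - g u) • e₁‖ + ‖(b - g v) • e₂‖ := norm_add_le _ _
        _ ≤ ‖g - f‖ + ‖(a - g u) • e₁‖ + ‖(b - g v) • e₂‖ := by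
            gcongr; exact norm_add_le _ _
        _ = ‖g - f‖ + |a - g u| * ‖e₁‖ + |b - g v| * ‖e₂‖ := by
            rw [norm_smul (a - g u) e₁, norm_smul (b - g v) e₂, Real.norm_eq_abs, Real.norm_eq_abs]
        _ ≤ ‖g - f‖ + ‖g - f‖ * ‖e₁‖ +
              ‖g - f‖ * ‖e₂‖ := by
            gcongr <;> positivity
        _ = ‖g - f‖ * M := by rw [hM]; ring
    have : ‖g - f‖ * M < δ * M := by gcongr
    have hlt : dist f g' < δ * M := lt_of_le_of_lt key this
    have heq : δ * M = ε / 2 := by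
      rw [hδ]; field_simp
    rw [heq] at hlt
    linarith
end

section
/- Let X be a compact Hausdorff space, let x₁,...,x_k be distinct points of X and v₁,...,v_k ∈ ℝ. If 𝒜 is a unital subalgebra of C(X,ℝ) separating points, then {f ∈ 𝒜 : f(x_i) = v_i for all i} is dense in {f ∈ C(X,ℝ) : f(x_i) = v_i for all i} in the sup norm. -/
open Finset in
lemma exists_lagrange (X : Type*) [TopologicalSpace X] [CompactSpace X] [T2Space X]
    (A : Subalgebra ℝ C(X, ℝ)) (hA : A.SeparatesPoints)
    (k : ℕ) (x : Fin k → X) (hx : Function.Injective x) :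
    ∃ e : Fin k → C(X, ℝ), ∀ i, e i ∈ A ∧ e i (x i) = 1 ∧ ∀ j, j ≠ i → e i (x j) = 0 := by
  have hsep : ∀ i j : Fin k, i ≠ j → ∃ g : C(X, ℝ), g ∈ A ∧ g (x i) ≠ g (x j) := by
    intro i j hij
    obtain ⟨_, ⟨g, hg, rfl⟩, hgx⟩ := hA (fun h => hij (hx h))
    exact ⟨g, hg, hgx⟩
  choose g hgA hgx using fun i j (h : i ≠ j) => hsep i j h
  classical
  refine ⟨fun i => ∏ j ∈ univ.erase i,
    (if h : i ≠ j then
      (g i j h - algebraMap ℝ C(X, ℝ) (g i j h (x j))) *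
        algebraMap ℝ C(X, ℝ) ((g i j h (x i) - g i j h (x j))⁻¹)
     else 1), fun i => ?_⟩
  refine ⟨?_, ?_, ?_⟩
  · refine Subalgebra.prod_mem A fun j _ => ?_
    split
    · exact mul_mem (sub_mem (hgA _ _ _) (Subalgebra.algebraMap_mem A _))
        (Subalgebra.algebraMap_mem A _)
    · exact one_mem A
  · rw [ContinuousMap.prod_apply]
    refine Finset.prod_eq_one fun j hj => ?_
    rw [dif_pos (Finset.ne_of_mem_erase hj).symm]
    simp only [ContinuousMap.mul_apply, ContinuousMap.sub_apply]
    simp only [_root_.algebraMap_apply (R := ℝ) (α := X), smul_eq_mul, mul_one]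
    exact mul_inv_cancel₀ (sub_ne_zero.mpr (hgx i j _))
  · intro j hj
    rw [ContinuousMap.prod_apply]
    refine Finset.prod_eq_zero (Finset.mem_erase.mpr ⟨hj, Finset.mem_univ j⟩) ?_
    rw [dif_pos hj.symm]
    simp [ContinuousMap.mul_apply, ContinuousMap.sub_apply]

theorem stmt11 (X : Type*) [TopologicalSpace X] [CompactSpace X] [T2Space X]
    (A : Subalgebra ℝ C(X, ℝ)) (hA : A.SeparatesPoints)
    (k : ℕ) (x : Fin k → X) (hx : Function.Injective x) (v : Fin k → ℝ) :
    {f : C(X, ℝ) | ∀ i, f (x i) = v i} ⊆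
      closure {f : C(X, ℝ) | f ∈ A ∧ ∀ i, f (x i) = v i} := by
  obtain ⟨e, he⟩ := exists_lagrange X A hA k x hx
  intro f hf
  rw [Metric.mem_closure_iff]
  intro ε hε
  set S : ℝ := ∑ i, ‖e i‖ with hS
  have hS0 : (0:ℝ) ≤ S := Finset.sum_nonneg fun i _ => norm_nonneg _
  set ε' : ℝ := ε / (1 + S) with hε'
  have h1S : (0:ℝ) < 1 + S := by linarith
  have hε'0 : 0 < ε' := div_pos hε h1S
  -- approximate f by g ∈ A
  have hdense : (A.topologicalClosure : Set C(X, ℝ)) = Set.univ := by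
    rw [ContinuousMap.subalgebra_topologicalClosure_eq_top_of_separatesPoints A hA]
    rfl
  have hfcl : f ∈ closure (A : Set C(X, ℝ)) := by
    have : f ∈ (A.topologicalClosure : Set C(X, ℝ)) := by rw [hdense]; trivial
    exact this
  obtain ⟨g, hgA, hgd⟩ := Metric.mem_closure_iff.mp hfcl ε' hε'0
  -- correct g
  set h : C(X, ℝ) := g + ∑ i, (v i - g (x i)) • e i with hh
  have hhA : h ∈ A := by
    refine add_mem hgA (Subalgebra.sum_mem A fun i _ => ?_)
    exact Subalgebra.smul_mem A (he i).1 _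
  have hhv : ∀ i, h (x i) = v i := by
    intro i
    simp only [hh, ContinuousMap.add_apply, ContinuousMap.sum_apply, ContinuousMap.smul_apply]
    rw [Finset.sum_eq_single i]
    · rw [(he i).2.1]; simp
    · intro j _ hji
      rw [(he j).2.2 i (Ne.symm hji)]; simp
    · simp
  refine ⟨h, ⟨hhA, hhv⟩, ?_⟩
  have hdfg : dist f g < ε' := hgd
  have key : ∀ i, |v i - g (x i)| ≤ dist f g := by
    intro i
    rw [← hf i]
    calc |f (x i) - g (x i)| = dist (f (x i)) (g (x i)) := (Real.dist_eq _ _).symm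
      _ ≤ dist f g := ContinuousMap.dist_apply_le_dist (x i)
  have hsum : dist g h ≤ dist f g * S := by
    have : dist g h = ‖∑ i, (v i - g (x i)) • e i‖ := by
      rw [dist_eq_norm, hh]; simp
    rw [this, hS, Finset.mul_sum]
    refine (norm_sum_le _ _).trans (Finset.sum_le_sum fun i _ => ?_)
    have h1 : ‖(v i - g (x i)) • e i‖ ≤ ‖v i - g (x i)‖ * ‖e i‖ :=
      norm_smul_le (v i - g (x i)) (e i)
    refine h1.trans ?_
    rw [Real.norm_eq_abs]
    exact mul_le_mul_of_nonneg_right (key i) (norm_nonneg _)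
  have : dist f h ≤ dist f g + dist g h := dist_triangle f g h
  have : dist f h < ε' * (1 + S) := by
    have h2 : dist f g * S ≤ ε' * S :=
      mul_le_mul_of_nonneg_right hdfg.le hS0
    calc dist f h ≤ dist f g + dist g h := dist_triangle f g h
      _ ≤ dist f g + dist f g * S := by linarith
      _ < ε' + ε' * S := by nlinarith
      _ = ε' * (1 + S) := by ring
  calc dist f h < ε' * (1 + S) := this
    _ = ε := by rw [hε', div_mul_cancel₀ ε h1S.ne']
end

section
/- Fix q ∈ S¹ with lift q̃ ∈ [0,1) (p(q̃) = q) and m ∈ ℤ. The set PL_m^q(S¹,S¹) of continuous f : S¹ → S¹ whose lift f̃_α is piecewise linear with f̃_α(0) = q̃ and f̃_α(1) = q̃ + m is dense, in the metric d₀, in C_m^q(S¹,S¹) = {f ∈ C(S¹,S¹) : f((1,0)) = q and W(f) = m}. -/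
open Real unitInterval

/-- The exponential covering map `p(t) = (cos 2πt, sin 2πt)`, with the unit circle
realized as the unit circle `Circle` in `ℂ`. -/
noncomputable def p (t : ℝ) : Circle := Circle.exp (2 * π * t)

/-- The loop `α : [0,1] → S¹`, `α(t) = (cos 2πt, sin 2πt)`. -/
noncomputable def α (t : unitInterval) : Circle := p t

/-- A continuous function on `[0,1]` is piecewise linear if there is a partition
`0 = p₀ < p₁ < ... < p_k = 1` on each piece of which it is given by the affine
interpolation formula. -/
def IsPL (f : C(unitInterval, ℝ)) : Prop :=
  ∃ k : ℕ, ∃ P : Fin (k + 1) → ℝ, ∃ Q : Fin (k + 1) → ℝ,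
    StrictMono P ∧ P 0 = 0 ∧ P (Fin.last k) = 1 ∧
      ∀ i : Fin k, ∀ t : unitInterval, (t : ℝ) ∈ Set.Icc (P i.castSucc) (P i.succ) →
        f t = Q i.castSucc +
          (Q i.succ - Q i.castSucc) * ((t : ℝ) - P i.castSucc) / (P i.succ - P i.castSucc)

lemma p_eq_p_iff {x y : ℝ} : p x = p y ↔ ∃ n : ℤ, x = y + n := by
  unfold p
  rw [Circle.exp_eq_exp]
  constructor
  · rintro ⟨n, hn⟩
    refine ⟨n, ?_⟩
    have hπ : (2 * π) ≠ 0 := by positivity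
    apply mul_left_cancel₀ hπ
    rw [mul_add]
    linarith
  · rintro ⟨n, hn⟩
    exact ⟨n, by rw [hn]; ring⟩

lemma int_eq_zero_of_Ico {x y : ℝ} {n : ℤ} (hx : x ∈ Set.Ico (0:ℝ) 1)
    (hy : y ∈ Set.Ico (0:ℝ) 1) (h : x = y + n) : n = 0 := by
  obtain ⟨hx0, hx1⟩ := hx
  obtain ⟨hy0, hy1⟩ := hy
  have h1 : (-1 : ℝ) < (n : ℝ) := by linarith
  have h2 : (n : ℝ) < 1 := by linarith
  have h1' : (-1 : ℤ) < n := by exact_mod_cast h1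
  have h2' : n < 1 := by exact_mod_cast h2
  omega

/-- clamp to `[0,1]` -/
noncomputable def clamp (x : ℝ) : ℝ := max 0 (min 1 x)

lemma clamp_of_nonpos {x : ℝ} (h : x ≤ 0) : clamp x = 0 := by
  unfold clamp
  rw [min_eq_right (h.trans zero_le_one), max_eq_left h]

lemma clamp_of_one_le {x : ℝ} (h : 1 ≤ x) : clamp x = 1 := by
  unfold clamp
  rw [min_eq_left h, max_eq_right zero_le_one]

lemma clamp_of_mem {x : ℝ} (h0 : 0 ≤ x) (h1 : x ≤ 1) : clamp x = x := by
  unfold clamp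
  rw [min_eq_right h1, max_eq_right h0]

lemma clamp_continuous : Continuous clamp :=
  continuous_const.max (continuous_const.min continuous_id)

set_option maxHeartbeats 1000000 in
theorem stmt14 (L : C(Circle, Circle) → C(unitInterval, ℝ))
    (hlift : ∀ f, ∀ t, p (L f t) = f (α t))
    (hL0 : ∀ f, L f 0 ∈ Set.Ico (0 : ℝ) 1)
    (q : Circle) (qt : ℝ) (hqt : qt ∈ Set.Ico (0 : ℝ) 1) (hpq : p qt = q) (m : ℤ)
    (f : C(Circle, Circle)) (hfq : f 1 = q) (hW : L f 1 - L f 0 = m)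
    (ε : ℝ) (hε : 0 < ε) :
    ∃ g : C(Circle, Circle), g 1 = q ∧ L g 1 - L g 0 = m ∧
      IsPL (L g) ∧ L g 0 = qt ∧ L g 1 = qt + m ∧
      2 * π * ⨆ t, |L f t - L g t| < ε := by
  have hπ : (0:ℝ) < π := Real.pi_pos
  have hcoe0 : ((0:unitInterval):ℝ) = 0 := rfl
  have hcoe1 : ((1:unitInterval):ℝ) = 1 := rfl
  set u : C(unitInterval, ℝ) := L f with hu
  have hp0 : p 0 = 1 := by unfold p; rw [mul_zero, Circle.exp_zero]
  have hα0 : α (0 : unitInterval) = 1 := by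
    unfold α; rw [hcoe0, hp0]
  have hu0 : u 0 = qt := by
    have h1 : p (u 0) = q := by rw [hu, hlift f 0, hα0, hfq]
    rw [← hpq] at h1
    obtain ⟨n, hn⟩ := p_eq_p_iff.mp h1
    have := int_eq_zero_of_Ico (hL0 f) hqt hn
    rw [this] at hn; simpa using hn
  have hu1 : u 1 = qt + m := by
    have : u 1 - u 0 = m := hW
    rw [hu0] at this; linarith
  -- choose η and the mesh
  set η : ℝ := ε / (4 * π) with hη_def
  have hη : 0 < η := by positivity
  obtain ⟨δ, hδ, hδ'⟩ := Metric.uniformContinuous_iff.mp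
    (CompactSpace.uniformContinuous_of_continuous u.continuous) η hη
  obtain ⟨n₀, hn₀⟩ := exists_nat_one_div_lt hδ
  set K : ℕ := n₀ + 1 with hK_def
  have hKpos : 0 < K := Nat.succ_pos _
  have hK0 : (0:ℝ) < K := by exact_mod_cast hKpos
  have hmesh : 1 / (K:ℝ) < δ := by
    have : ((n₀ : ℝ) + 1) = (K : ℝ) := by push_cast [hK_def]; ring
    rwa [this] at hn₀
  -- nodes
  set node : ℕ → unitInterval := fun j => Set.projIcc 0 1 zero_le_one ((j:ℝ) / K) with hnode
  have hnode_coe : ∀ j : ℕ, j ≤ K → ((node j : ℝ)) = (j:ℝ) / K := by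
    intro j hj
    rw [hnode]
    simp only
    rw [Set.projIcc_of_mem]
    constructor
    · positivity
    · rw [div_le_one hK0]; exact_mod_cast hj
  set Q' : ℕ → ℝ := fun j => u (node j) with hQ'
  -- the PL function
  set F : ℝ → ℝ := fun t =>
    Q' 0 + ∑ j ∈ Finset.range K, (Q' (j+1) - Q' j) * clamp ((K:ℝ) * t - j) with hF
  have hFcont : Continuous F := by
    apply continuous_const.add
    apply continuous_finset_sum
    intro j _
    exact continuous_const.mul
      (clamp_continuous.comp ((continuous_const.mul continuous_id).sub continuous_const))
  -- the piece formula
  have hpiece : ∀ i : ℕ, i < K → ∀ t : ℝ, (i:ℝ)/K ≤ t → t ≤ ((i:ℝ)+1)/K →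
      F t = Q' i + (Q' (i+1) - Q' i) * ((K:ℝ) * t - i) := by
    intro i hi t ht1 ht2
    have hKt1 : (i:ℝ) ≤ K * t := by
      rw [div_le_iff₀ hK0] at ht1; linarith
    have hKt2 : (K:ℝ) * t ≤ (i:ℝ) + 1 := by
      rw [le_div_iff₀ hK0] at ht2; linarith
    rw [hF]
    simp only
    have hsplit : ∑ j ∈ Finset.range K, (Q' (j+1) - Q' j) * clamp ((K:ℝ) * t - j)
        = ∑ j ∈ Finset.range (i+1), (Q' (j+1) - Q' j) * clamp ((K:ℝ) * t - j)
        + ∑ j ∈ Finset.Ico (i+1) K, (Q' (j+1) - Q' j) * clamp ((K:ℝ) * t - j) := by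
      rw [Finset.range_eq_Ico, Finset.range_eq_Ico]
      exact (Finset.sum_Ico_consecutive _ (Nat.zero_le _) hi).symm
    rw [hsplit]
    have h2 : ∑ j ∈ Finset.Ico (i+1) K, (Q' (j+1) - Q' j) * clamp ((K:ℝ) * t - j) = 0 := by
      apply Finset.sum_eq_zero
      intro j hj
      have hj' : i + 1 ≤ j := (Finset.mem_Ico.mp hj).1
      have : (K:ℝ) * t - j ≤ 0 := by
        have : ((i:ℝ) + 1) ≤ (j:ℝ) := by exact_mod_cast hj'
        linarith
      rw [clamp_of_nonpos this, mul_zero]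
    rw [h2, add_zero, Finset.sum_range_succ]
    have h3 : ∑ j ∈ Finset.range i, (Q' (j+1) - Q' j) * clamp ((K:ℝ) * t - j)
        = ∑ j ∈ Finset.range i, (Q' (j+1) - Q' j) := by
      apply Finset.sum_congr rfl
      intro j hj
      have hj' : j < i := Finset.mem_range.mp hj
      have : (1:ℝ) ≤ (K:ℝ) * t - j := by
        have : ((j:ℝ) + 1) ≤ (i:ℝ) := by exact_mod_cast hj'
        linarith
      rw [clamp_of_one_le this, mul_one]
    rw [h3, Finset.sum_range_sub (fun j => Q' j),
      clamp_of_mem (by linarith) (by linarith)]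
    ring
  -- F as a continuous map on unitInterval
  set Fc : C(unitInterval, ℝ) := ⟨fun t => F t, hFcont.comp continuous_subtype_val⟩ with hFc
  -- endpoints
  have hnode0 : node 0 = 0 := by
    apply Subtype.ext
    rw [hnode_coe 0 (Nat.zero_le _)]
    simp [hcoe0]
  have hnodeK : node K = 1 := by
    apply Subtype.ext
    rw [hnode_coe K le_rfl]
    rw [hcoe1, div_self (ne_of_gt hK0)]
  have hF0 : F 0 = qt := by
    rw [hpiece 0 hKpos 0 (by simp) (by positivity)]
    simp [hQ', hnode0, hu0]
  have hF1 : F 1 = qt + m := by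
    have hK1 : K - 1 < K := Nat.sub_lt hKpos one_pos
    have hcast : ((K - 1 : ℕ) : ℝ) = (K:ℝ) - 1 := by
      rw [Nat.cast_sub hKpos]; simp
    rw [hpiece (K-1) hK1 1 (by rw [hcast, div_le_one hK0]; linarith)
      (by rw [hcast, le_div_iff₀ hK0]; linarith)]
    rw [hcast]
    have he1 : (K:ℝ) * 1 - ((K:ℝ) - 1) = 1 := by ring
    rw [he1, mul_one]
    have he2 : K - 1 + 1 = K := Nat.succ_pred_eq_of_pos hKpos
    rw [he2]
    simp only [hQ', hnodeK, hu1]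
    ring
  -- existence of a containing piece
  have hexists_piece : ∀ t : unitInterval,
      ∃ i : ℕ, i < K ∧ (i:ℝ)/K ≤ (t:ℝ) ∧ (t:ℝ) ≤ ((i:ℝ)+1)/K := by
    intro t
    obtain ⟨ht0, ht1⟩ := t.2
    rcases eq_or_lt_of_le ht1 with h1 | h1
    · have hcast : ((K - 1 : ℕ) : ℝ) = (K:ℝ) - 1 := by
        rw [Nat.cast_sub hKpos]; simp
      refine ⟨K - 1, Nat.sub_lt hKpos one_pos, ?_, ?_⟩
      · rw [hcast, h1, div_le_one hK0]; linarith
      · rw [hcast, h1, le_div_iff₀ hK0]; linarith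
    · set n : ℤ := ⌊(K:ℝ) * t⌋ with hn
      have hKt0 : (0:ℝ) ≤ (K:ℝ) * t := by positivity
      have hn0 : 0 ≤ n := Int.le_floor.mpr (by exact_mod_cast hKt0)
      have hnK : n < K := by
        rw [hn, Int.floor_lt]
        have hlt : (K:ℝ) * t < K * 1 := mul_lt_mul_of_pos_left h1 hK0
        have hcc : (((K:ℕ):ℤ):ℝ) = ((K:ℕ):ℝ) := by exact_mod_cast rfl
        rw [hcc]
        linarith
      have hcast : ((n.toNat : ℕ) : ℝ) = (n : ℝ) := by
        exact_mod_cast Int.toNat_of_nonneg hn0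
      refine ⟨n.toNat, by omega, ?_, ?_⟩
      · rw [div_le_iff₀ hK0, hcast]
        have hfl := Int.floor_le ((K:ℝ) * t)
        rw [← hn] at hfl
        linarith
      · rw [le_div_iff₀ hK0, hcast]
        have hfl := Int.lt_floor_add_one ((K:ℝ) * t)
        rw [← hn] at hfl
        linarith
  -- uniform bound
  have hbound : ∀ t : unitInterval, |u t - Fc t| ≤ η := by
    intro t
    obtain ⟨i, hi, ht1, ht2⟩ := hexists_piece t
    have hKt1 : (i:ℝ) ≤ K * t := by rw [div_le_iff₀ hK0] at ht1; linarith
    have hKt2 : (K:ℝ) * t ≤ (i:ℝ) + 1 := by rw [le_div_iff₀ hK0] at ht2; linarith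
    have hFt : Fc t = Q' i + (Q' (i+1) - Q' i) * ((K:ℝ) * t - i) :=
      hpiece i hi t ht1 ht2
    set s : ℝ := (K:ℝ) * t - i with hs
    have hs0 : 0 ≤ s := by rw [hs]; linarith
    have hs1 : s ≤ 1 := by rw [hs]; linarith
    have hd1 : |Q' i - u t| < η := by
      have hdist : dist (node i) t < δ := by
        rw [Subtype.dist_eq, Real.dist_eq, hnode_coe i hi.le, abs_sub_lt_iff]
        constructor
        · calc (i:ℝ)/K - t ≤ 0 := by linarith
            _ < δ := hδ
        · calc (t:ℝ) - (i:ℝ)/K ≤ ((i:ℝ)+1)/K - (i:ℝ)/K := by linarith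
            _ = 1/K := by field_simp; ring
            _ < δ := hmesh
      have := hδ' hdist
      rwa [Real.dist_eq] at this
    have hd2 : |Q' (i+1) - u t| < η := by
      have hdist : dist (node (i+1)) t < δ := by
        rw [Subtype.dist_eq, Real.dist_eq, hnode_coe (i+1) hi, abs_sub_lt_iff]
        simp only [Nat.cast_add, Nat.cast_one]
        constructor
        · calc ((i:ℝ)+1)/K - t ≤ ((i:ℝ)+1)/K - (i:ℝ)/K := by linarith
            _ = 1/K := by field_simp; ring
            _ < δ := hmesh
        · calc (t:ℝ) - ((i:ℝ)+1)/K ≤ 0 := by linarith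
            _ < δ := hδ
      have := hδ' hdist
      rwa [Real.dist_eq] at this
    have hcomb : u t - Fc t = (1 - s) * (u t - Q' i) + s * (u t - Q' (i+1)) := by
      rw [hFt]; ring
    calc |u t - Fc t| = |(1 - s) * (u t - Q' i) + s * (u t - Q' (i+1))| := by rw [hcomb]
      _ ≤ |(1 - s) * (u t - Q' i)| + |s * (u t - Q' (i+1))| := abs_add_le _ _
      _ = (1 - s) * |u t - Q' i| + s * |u t - Q' (i+1)| := by
          rw [abs_mul, abs_mul, abs_of_nonneg (by linarith : (0:ℝ) ≤ 1 - s),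
            abs_of_nonneg hs0]
      _ ≤ (1 - s) * η + s * η := by
          apply add_le_add
          · apply mul_le_mul_of_nonneg_left _ (by linarith)
            rw [abs_sub_comm]; exact hd1.le
          · apply mul_le_mul_of_nonneg_left _ hs0
            rw [abs_sub_comm]; exact hd2.le
      _ = η := by ring
  -- Fc is PL
  have hPL : IsPL Fc := by
    refine ⟨K, fun i => ((i:ℕ):ℝ)/K, fun i => Q' (i:ℕ), ?_, ?_, ?_, ?_⟩
    · intro i j hij
      have hvv : ((i:ℕ):ℝ) < ((j:ℕ):ℝ) := by exact_mod_cast hij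
      exact (div_lt_div_iff_of_pos_right hK0).mpr hvv
    · simp
    · simp [div_self (ne_of_gt hK0)]
    · intro i t ht
      simp only [Fin.coe_castSucc, Fin.val_succ] at ht ⊢
      obtain ⟨h1, h2⟩ := ht
      simp only [Nat.cast_add, Nat.cast_one] at h1 h2 ⊢
      have hdenom : (((i:ℕ):ℝ)+1)/(K:ℝ) - ((i:ℕ):ℝ)/(K:ℝ) = 1/(K:ℝ) := by
        rw [div_sub_div_same]; norm_num
      rw [show Fc t = F (t:ℝ) from rfl, hpiece i.1 i.isLt t h1 h2, hdenom]
      have hKne : (K:ℝ) ≠ 0 := ne_of_gt hK0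
      rw [div_div_eq_mul_div, div_one]
      have hexp : ((t:ℝ) - ((i:ℕ):ℝ)/(K:ℝ)) * (K:ℝ) = (K:ℝ) * (t:ℝ) - ((i:ℕ):ℝ) := by
        field_simp
      rw [mul_comm ((t:ℝ) - ((i:ℕ):ℝ)/(K:ℝ)) (K:ℝ)] at hexp
      rw [show (Q' ((i:ℕ)+1) - Q' (i:ℕ)) * ((t:ℝ) - ((i:ℕ):ℝ)/(K:ℝ)) * (K:ℝ)
          = (Q' ((i:ℕ)+1) - Q' (i:ℕ)) * (((t:ℝ) - ((i:ℕ):ℝ)/(K:ℝ)) * (K:ℝ)) from by ring]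
      rw [show ((t:ℝ) - ((i:ℕ):ℝ)/(K:ℝ)) * (K:ℝ) = (K:ℝ) * (t:ℝ) - ((i:ℕ):ℝ) from by
        field_simp]
  -- construct g from F via the circle
  have hp_cont : Continuous p := by
    unfold p
    exact Circle.exp.continuous.comp (continuous_const.mul continuous_id)
  have hg0eq : p (F 0) = p (F 1) := by
    rw [hF0, hF1]
    exact (p_eq_p_iff.mpr ⟨m, rfl⟩).symm
  set e : AddCircle (1:ℝ) ≃ₜ Circle := AddCircle.homeomorphCircle one_ne_zero with he_def
  have he : ∀ x : ℝ, e ((x : AddCircle (1:ℝ))) = p x := by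
    intro x
    rw [he_def, AddCircle.homeomorphCircle_apply, AddCircle.toCircle_apply_mk]
    unfold p
    norm_num
  have hlift_cont : Continuous (AddCircle.liftIco 1 0 (fun t => p (F t))) := by
    apply AddCircle.liftIco_continuous
    · rw [zero_add]; exact hg0eq
    · exact (hp_cont.comp hFcont).continuousOn
  set g : C(Circle, Circle) := ⟨(AddCircle.liftIco 1 0 fun t => p (F t)) ∘ e.symm,
    hlift_cont.comp e.symm.continuous⟩ with hg
  have hgp : ∀ x : ℝ, x ∈ Set.Ico (0:ℝ) 1 → g (p x) = p (F x) := by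
    intro x hx
    have hsymm : e.symm (p x) = (x : AddCircle (1:ℝ)) := by
      rw [← he x, Homeomorph.symm_apply_apply]
    show (AddCircle.liftIco 1 0 fun t => p (F t)) (e.symm (p x)) = p (F x)
    rw [hsymm]
    exact AddCircle.liftIco_coe_apply (by rwa [zero_add])
  -- the lift of g equals F
  have hkey : ∀ t : unitInterval, ∃ n : ℤ, (L g) t = F (t:ℝ) + n := by
    intro t
    obtain ⟨ht0, ht1⟩ := t.2
    rcases eq_or_lt_of_le ht1 with h | h
    · have hα1' : α t = p 1 := by unfold α; rw [← h]
      have hp1 : p 1 = p 0 := p_eq_p_iff.mpr ⟨1, by norm_num⟩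
      have hcalc : p ((L g) t) = p (F 0) := by
        rw [hlift g t, hα1', hp1]
        exact hgp 0 ⟨le_rfl, one_pos⟩
      obtain ⟨n, hn⟩ := p_eq_p_iff.mp hcalc
      refine ⟨n - m, ?_⟩
      rw [h, hF1]
      rw [hF0] at hn
      push_cast
      linarith
    · have hcalc : p ((L g) t) = p (F (t:ℝ)) := by
        rw [hlift g t]
        exact hgp (t:ℝ) ⟨ht0, h⟩
      obtain ⟨n, hn⟩ := p_eq_p_iff.mp hcalc
      exact ⟨n, hn⟩
  -- the integer is constant
  set c : unitInterval → ℝ := fun s => (L g) s - F ((s:ℝ)) with hc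
  have hc_cont : Continuous c :=
    (L g).continuous.sub (hFcont.comp continuous_subtype_val)
  have hconst : ∀ t : unitInterval, c t = c 0 := by
    intro t
    by_contra hne
    obtain ⟨n0, hn0⟩ := hkey 0
    obtain ⟨nt, hnt⟩ := hkey t
    have hc0 : c 0 = (n0:ℝ) := by rw [hc]; simp only; rw [hn0]; ring
    have hct : c t = (nt:ℝ) := by rw [hc]; simp only; rw [hnt]; ring
    have hne' : n0 ≠ nt := by
      intro hh
      apply hne
      rw [hc0, hct, hh]
    have hmem : ((min n0 nt : ℤ):ℝ) + 1/2 ∈ Set.uIcc (c 0) (c t) := by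
      rw [Set.mem_uIcc, hc0, hct]
      rcases le_total n0 nt with hle | hle
      · left
        rw [min_eq_left hle]
        have h1 : n0 + 1 ≤ nt := by omega
        have h1' : (n0:ℝ) + 1 ≤ (nt:ℝ) := by exact_mod_cast h1
        constructor <;> linarith
      · right
        rw [min_eq_right hle]
        have h1 : nt + 1 ≤ n0 := by omega
        have h1' : (nt:ℝ) + 1 ≤ (n0:ℝ) := by exact_mod_cast h1
        constructor <;> linarith
    set C : ℝ → ℝ := fun x => c (Set.projIcc 0 1 zero_le_one x) with hC
    have hC_cont : Continuous C := hc_cont.comp continuous_projIcc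
    have hC0 : C 0 = c 0 := by
      rw [hC]
      simp only
      congr 1
      exact Set.projIcc_val zero_le_one 0
    have hCt : C (t:ℝ) = c t := by
      rw [hC]
      simp only
      congr 1
      exact Set.projIcc_val zero_le_one t
    rw [← hC0, ← hCt] at hmem
    obtain ⟨s', _, hs2'⟩ := intermediate_value_uIcc
      (show ContinuousOn C (Set.uIcc 0 (t:ℝ)) from hC_cont.continuousOn) hmem
    set s : unitInterval := Set.projIcc 0 1 zero_le_one s' with hsdef
    have hs2 : c s = ((min n0 nt : ℤ):ℝ) + 1/2 := hs2'
    obtain ⟨ns, hns⟩ := hkey s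
    have hcs : c s = (ns:ℝ) := by rw [hc]; simp only; rw [hns]; ring
    rw [hcs] at hs2
    have h2 : ((2 * (ns - min n0 nt) : ℤ) : ℝ) = 1 := by push_cast at hs2 ⊢; linarith
    have h3 : (2 * (ns - min n0 nt) : ℤ) = 1 := by exact_mod_cast h2
    omega
  obtain ⟨n0, hn0⟩ := hkey 0
  have hn0_zero : n0 = 0 := by
    apply int_eq_zero_of_Ico (hL0 g) hqt
    rw [hn0, hcoe0, hF0]
  have hLg : ∀ t : unitInterval, (L g) t = F (t:ℝ) := by
    intro t
    have h1 := hconst t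
    rw [hc] at h1
    simp only at h1
    have h2 : (L g) 0 - F ((0:unitInterval):ℝ) = 0 := by
      rw [hn0, hn0_zero]; push_cast; ring
    rw [h2] at h1
    linarith
  have hLgFc : L g = Fc := by
    apply ContinuousMap.ext
    intro t
    exact hLg t
  refine ⟨g, ?_, ?_, ?_, ?_, ?_, ?_⟩
  · rw [← hp0, hgp 0 ⟨le_rfl, one_pos⟩, hF0, hpq]
  · rw [hLg 1, hLg 0, hcoe1, hcoe0, hF1, hF0]; ring
  · rw [hLgFc]; exact hPL
  · rw [hLg 0, hcoe0, hF0]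
  · rw [hLg 1, hcoe1, hF1]
  · have hsup : (⨆ t, |(L f) t - (L g) t|) ≤ η := by
      apply ciSup_le
      intro t
      rw [hLg t]
      exact hbound t
    have hπne : π ≠ 0 := ne_of_gt hπ
    have h2πη : 2 * π * η = ε / 2 := by
      rw [hη_def]
      field_simp
      ring
    calc 2 * π * ⨆ t, |(L f) t - (L g) t| ≤ 2 * π * η := by
          apply mul_le_mul_of_nonneg_left hsup (by positivity)
      _ = ε / 2 := h2πη
      _ < ε := by linarith
end

section
/- Let 𝒜 be a unital point-separating subalgebra of C([0,1],ℝ), q ∈ S¹ with lift q̃ ∈ [0,1), and m ∈ ℤ. The set of continuous f : S¹ → S¹ whose lift f̃_α lies in 𝒜 and satisfies f̃_α(0) = q̃, f̃_α(1) = q̃ + m is dense, in the metric d₀, in C_m^q(S¹,S¹). -/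
open Real unitInterval

lemma p_injOn {x y : ℝ} (hx : x ∈ Set.Ico (0:ℝ) 1) (hy : y ∈ Set.Ico (0:ℝ) 1)
    (h : p x = p y) : x = y := by
  obtain ⟨n, hn⟩ := p_eq_p_iff.1 h
  obtain ⟨hx0, hx1⟩ := hx
  obtain ⟨hy0, hy1⟩ := hy
  have h1 : (-1 : ℝ) < n := by linarith
  have h2 : (n : ℝ) < 1 := by linarith
  have h1' : (-1 : ℤ) < n := by exact_mod_cast h1
  have h2' : n < 1 := by exact_mod_cast h2
  have : n = 0 := by omega
  subst this
  simpa using hn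

lemma α_zero : α 0 = 1 := by simp [α, p]

lemma continuous_p : Continuous p :=
  Circle.exp.continuous.comp (continuous_const.mul continuous_id)

lemma exists_g (h : C(unitInterval, ℝ)) (hper : p (h 1) = p (h 0)) :
    ∃ g : C(Circle, Circle), ∀ t, g (α t) = p (h t) := by
  set F : ℝ → Circle := fun t => p (h (Set.projIcc 0 1 zero_le_one t)) with hF
  have hFc : Continuous F :=
    continuous_p.comp ((map_continuous h).comp continuous_projIcc)
  have hF0 : F 0 = p (h 0) := by
    simp [hF, Set.projIcc_left]
  have hF1 : F 1 = p (h 1) := by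
    simp [hF, Set.projIcc_right]
  have hF01 : F 0 = F (0 + 1) := by rw [zero_add, hF0, hF1, hper]
  set Φ := AddCircle.homeomorphCircle (one_ne_zero : (1:ℝ) ≠ 0) with hΦdef
  have hΦ : ∀ x : ℝ, Φ ((x : ℝ) : AddCircle (1:ℝ)) = p x := by
    intro x
    rw [hΦdef, AddCircle.homeomorphCircle_apply, AddCircle.toCircle_apply_mk]
    unfold p; norm_num
  set G : AddCircle (1:ℝ) → Circle := AddCircle.liftIco 1 0 F with hG
  have hGc : Continuous G :=
    AddCircle.liftIco_zero_continuous (by simpa using hF01) hFc.continuousOn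
  refine ⟨⟨fun z => G (Φ.symm z), hGc.comp Φ.symm.continuous⟩, ?_⟩
  intro t
  have h1 : Φ.symm (α t) = (((t : ℝ) : ℝ) : AddCircle (1:ℝ)) := by
    rw [show α t = Φ ((t:ℝ) : AddCircle (1:ℝ)) from (hΦ t).symm]
    exact Φ.symm_apply_apply _
  show G (Φ.symm (α t)) = p (h t)
  rw [h1]
  rcases lt_or_eq_of_le t.2.2 with hlt | heq
  · rw [hG, AddCircle.liftIco_zero_coe_apply ⟨t.2.1, hlt⟩]
    simp only [hF]
    congr 1
    congr 1
    rw [Set.projIcc_of_mem zero_le_one t.2]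
  · have ht1 : t = 1 := Subtype.ext heq
    have : (((t:ℝ)) : AddCircle (1:ℝ)) = ((0:ℝ) : AddCircle (1:ℝ)) := by
      rw [heq]
      exact (AddCircle.coe_period (p := (1:ℝ)))
    rw [this, hG, AddCircle.liftIco_zero_coe_apply ⟨le_refl 0, zero_lt_one⟩, hF0, ht1, hper]

lemma int_valued_zero (c : C(unitInterval, ℝ)) (hc : ∀ t, ∃ n : ℤ, c t = n)
    (h0 : c 0 = 0) : ∀ t, c t = 0 := by
  intro t
  by_contra hne
  obtain ⟨n, hn⟩ := hc t
  have hn0 : n ≠ 0 := by rintro rfl; simp at hn; exact hne hn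
  have hr : IsPreconnected (Set.range c) := isPreconnected_range (map_continuous c)
  have hoc := hr.ordConnected
  have h0mem : (0:ℝ) ∈ Set.range c := ⟨0, h0⟩
  have hnmem : (n:ℝ) ∈ Set.range c := ⟨t, hn⟩
  have key : ∃ s, c s = 1/2 ∨ c s = -(1/2) := by
    rcases hn0.lt_or_gt with hlt | hgt
    · have hle' : n ≤ -1 := by omega
      have hle : (n:ℝ) ≤ -1 := by exact_mod_cast hle'
      obtain ⟨s, hs⟩ := hoc.out hnmem h0mem
        (show (-(1/2) : ℝ) ∈ Set.Icc (n:ℝ) 0 from ⟨by linarith, by norm_num⟩)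
      exact ⟨s, Or.inr hs⟩
    · have hge' : 1 ≤ n := by omega
      have hge : (1:ℝ) ≤ n := by exact_mod_cast hge'
      obtain ⟨s, hs⟩ := hoc.out h0mem hnmem
        (show (1/2 : ℝ) ∈ Set.Icc (0:ℝ) (n:ℝ) from ⟨by norm_num, by linarith⟩)
      exact ⟨s, Or.inl hs⟩
  obtain ⟨s, hs⟩ := key
  obtain ⟨k, hk⟩ := hc s
  rcases hs with hs | hs <;> rw [hk] at hs
  · have h1 : (2*k : ℝ) = 1 := by linarith
    have h2 : (2*k : ℤ) = 1 := by exact_mod_cast h1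
    omega
  · have h1 : (2*k : ℝ) = -1 := by linarith
    have h2 : (2*k : ℤ) = -1 := by exact_mod_cast h1
    omega

theorem stmt16 (A : Subalgebra ℝ C(unitInterval, ℝ)) (hA : A.SeparatesPoints)
    (L : C(Circle, Circle) → C(unitInterval, ℝ))
    (hlift : ∀ f, ∀ t, p (L f t) = f (α t))
    (hL0 : ∀ f, L f 0 ∈ Set.Ico (0 : ℝ) 1)
    (q : Circle) (qt : ℝ) (hqt : qt ∈ Set.Ico (0 : ℝ) 1) (hpq : p qt = q) (m : ℤ)
    (f : C(Circle, Circle)) (hfq : f 1 = q) (hW : L f 1 - L f 0 = m)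
    (ε : ℝ) (hε : 0 < ε) :
    ∃ g : C(Circle, Circle), g 1 = q ∧ L g 1 - L g 0 = m ∧
      L g ∈ A ∧ L g 0 = qt ∧ L g 1 = qt + m ∧
      2 * π * ⨆ t, |L f t - L g t| < ε := by
  have hπ := Real.pi_pos
  -- endpoints of the lift of f
  have hLf0 : L f 0 = qt := by
    apply p_injOn (hL0 f) hqt
    rw [hlift f 0, α_zero, hfq, hpq]
  have hLf1 : L f 1 = qt + m := by rw [← hLf0]; linarith
  -- a function u ∈ A with u 0 = 0, u 1 = 1
  have h01 : (0 : unitInterval) ≠ 1 := by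
    intro hc
    have := congrArg Subtype.val hc
    norm_num at this
  obtain ⟨-, ⟨e, heA, rfl⟩, hee⟩ := hA h01
  have hdne : e 1 - e 0 ≠ 0 := sub_ne_zero.2 (Ne.symm hee)
  set u : C(unitInterval, ℝ) :=
    (e 1 - e 0)⁻¹ • (e - algebraMap ℝ C(unitInterval, ℝ) (e 0)) with hu
  have huA : u ∈ A := A.smul_mem (A.sub_mem heA (A.algebraMap_mem _)) _
  have hu0 : u 0 = 0 := by simp [hu]
  have hu1 : u 1 = 1 := by
    simp [hu]
    field_simp
  -- Stone-Weierstrass approximation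
  set C : ℝ := 1 + ‖(1 : C(unitInterval, ℝ)) - u‖ + ‖u‖ with hCdef
  have hC : 0 < C := by positivity
  set δ : ℝ := ε / (2 * π * C) with hδdef
  have hδ : 0 < δ := by positivity
  obtain ⟨h₀, hh₀⟩ :=
    ContinuousMap.exists_mem_subalgebra_near_continuousMap_of_separatesPoints A hA (L f) δ hδ
  set c₀ : ℝ := qt - (h₀ : C(unitInterval, ℝ)) 0 with hc₀
  set c₁ : ℝ := qt + m - (h₀ : C(unitInterval, ℝ)) 1 with hc₁
  set h : C(unitInterval, ℝ) :=
    (h₀ : C(unitInterval, ℝ)) + c₀ • ((1 : C(unitInterval, ℝ)) - u) + c₁ • u with hh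
  have hhA : h ∈ A :=
    A.add_mem (A.add_mem h₀.2 (A.smul_mem (A.sub_mem A.one_mem huA) _)) (A.smul_mem huA _)
  have hh0 : h 0 = qt := by
    simp [hh, hu0, hc₀]
  have hh1 : h 1 = qt + m := by
    simp [hh, hu1, hc₁]
  -- norm bound
  have hbound : ‖L f - h‖ < δ * C := by
    have hD : ‖L f - (h₀ : C(unitInterval, ℝ))‖ < δ := by rwa [norm_sub_rev]
    have hc₀le : |c₀| ≤ ‖L f - (h₀ : C(unitInterval, ℝ))‖ := by
      have := ContinuousMap.norm_coe_le_norm (L f - (h₀ : C(unitInterval, ℝ))) 0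
      simp only [ContinuousMap.sub_apply, Real.norm_eq_abs] at this
      rwa [hc₀, ← hLf0]
    have hc₁le : |c₁| ≤ ‖L f - (h₀ : C(unitInterval, ℝ))‖ := by
      have := ContinuousMap.norm_coe_le_norm (L f - (h₀ : C(unitInterval, ℝ))) 1
      simp only [ContinuousMap.sub_apply, Real.norm_eq_abs] at this
      rwa [hc₁, ← hLf1]
    have heq : L f - h = (L f - (h₀ : C(unitInterval, ℝ)))
        - c₀ • ((1 : C(unitInterval, ℝ)) - u) - c₁ • u := by
      rw [hh]; abel
    calc ‖L f - h‖
        ≤ ‖(L f - (h₀ : C(unitInterval, ℝ))) - c₀ • ((1 : C(unitInterval, ℝ)) - u)‖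
            + ‖c₁ • u‖ := by rw [heq]; exact norm_sub_le _ _
      _ ≤ ‖L f - (h₀ : C(unitInterval, ℝ))‖ + ‖c₀ • ((1 : C(unitInterval, ℝ)) - u)‖
            + ‖c₁ • u‖ := by gcongr; exact norm_sub_le _ _
      _ = ‖L f - (h₀ : C(unitInterval, ℝ))‖ + |c₀| * ‖(1 : C(unitInterval, ℝ)) - u‖
            + |c₁| * ‖u‖ := by
          have e1 := norm_smul c₀ ((1 : C(unitInterval, ℝ)) - u)
          have e2 := norm_smul c₁ u
          simp only [Real.norm_eq_abs] at e1 e2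
          rw [e1, e2]
      _ ≤ ‖L f - (h₀ : C(unitInterval, ℝ))‖ + ‖L f - (h₀ : C(unitInterval, ℝ))‖ *
            ‖(1 : C(unitInterval, ℝ)) - u‖ + ‖L f - (h₀ : C(unitInterval, ℝ))‖ * ‖u‖ := by
          gcongr
      _ = ‖L f - (h₀ : C(unitInterval, ℝ))‖ * C := by rw [hCdef]; ring
      _ < δ * C := by exact mul_lt_mul_of_pos_right hD hC
  -- construct g
  have hper : p (h 1) = p (h 0) := by
    rw [hh0, hh1]
    exact p_eq_p_iff.2 ⟨m, rfl⟩
  obtain ⟨g, hg⟩ := exists_g h hper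
  have hkey : L g = h := by
    have hint : ∀ t, ∃ n : ℤ, (L g - h) t = n := by
      intro t
      obtain ⟨n, hn⟩ := p_eq_p_iff.1 ((hlift g t).trans (hg t))
      exact ⟨n, by simp [ContinuousMap.sub_apply, hn]⟩
    have h00 : L g 0 = h 0 := by
      apply p_injOn (hL0 g) (hh0 ▸ hqt)
      rw [hlift g 0, hg 0]
    have := int_valued_zero (L g - h) hint (by simp [h00])
    ext t
    have := this t
    simp only [ContinuousMap.sub_apply] at this
    linarith
  have hg1 : g 1 = q := by
    have := hg 0
    rw [α_zero, hh0, hpq] at this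
    exact this
  refine ⟨g, hg1, ?_, ?_, ?_, ?_, ?_⟩
  · rw [hkey, hh0, hh1]; ring
  · rw [hkey]; exact hhA
  · rw [hkey, hh0]
  · rw [hkey, hh1]
  · rw [hkey]
    have hsup : (⨆ t, |L f t - h t|) = ‖L f - h‖ := by
      rw [ContinuousMap.norm_eq_iSup_norm]
      simp only [ContinuousMap.sub_apply, Real.norm_eq_abs]
    rw [hsup]
    calc 2 * π * ‖L f - h‖ < 2 * π * (δ * C) := by
          exact mul_lt_mul_of_pos_left hbound (by positivity)
      _ = ε := by rw [hδdef]; field_simp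
end
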